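/- arXiv:1602.08096 — 2 statements merged into one kernel-verified Lean document; each statement's English description precedes it below -/
import Mathlib

section
/- (Averages comparison for local Campanato functions) Let b ∈ LC_{p,λ,P}^{{x₀}}(ℝⁿ), 1 ≤ p < ∞, 0 ≤ λ < 1/γ, and r₁ ≥ r₂ > 0. Then |b_{E(x₀,r₁)} − b_{E(x₀,r₂)}| ≤ C (1 + ln(r₁/r₂)) |E(x₀,r₁)|^λ ‖b‖_{LC_{p,λ,P}^{{x₀}}}, with C independent of b, r₁, r₂. -/
open Real Set MeasureTheory ENNReal

private lemma step_bound {α : Type*} [MeasurableSpace α] {μ : Measure α}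
    {b : α → ℝ} {p lam : ℝ} (hp : 1 ≤ p) (hlam0 : 0 ≤ lam)
    {A C : Set α} (hAC : A ⊆ C)
    (hA0 : μ A ≠ 0) (hCtop : μ C ≠ ∞)
    (hbA : Integrable b (μ.restrict A))
    (hbC : AEStronglyMeasurable b (μ.restrict C)) :
    ENNReal.ofReal |(μ C).toReal⁻¹ * (∫ z in C, b z ∂μ) -
        (μ A).toReal⁻¹ * ∫ z in A, b z ∂μ| ≤
      (μ A)⁻¹ * (μ C) ^ (1 + lam) *
        ((μ C) ^ (-(1 + lam * p)) *
          ∫⁻ y in C, ENNReal.ofReal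
            |b y - (μ C).toReal⁻¹ * ∫ z in C, b z ∂μ| ^ p ∂μ) ^ (1 / p) := by
  have hp0 : 0 < p := lt_of_lt_of_le one_pos hp
  have hC0 : μ C ≠ 0 := fun h => hA0 (le_antisymm (h ▸ measure_mono hAC) (zero_le))
  have hAtop : μ A ≠ ∞ := (lt_of_le_of_lt (measure_mono hAC) hCtop.lt_top).ne
  set c : ℝ := (μ C).toReal⁻¹ * ∫ z in C, b z ∂μ with hc
  have hmA : 0 < (μ A).toReal := ENNReal.toReal_pos hA0 hAtop
  haveI : IsFiniteMeasure (μ.restrict A) :=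
    ⟨by rw [Measure.restrict_apply_univ]; exact hAtop.lt_top⟩
  have hgA : Integrable (fun y => b y - c) (μ.restrict A) := hbA.sub (integrable_const c)
  have key1 : (μ C).toReal⁻¹ * (∫ z in C, b z ∂μ) - (μ A).toReal⁻¹ * ∫ z in A, b z ∂μ
      = -((μ A).toReal⁻¹ * ∫ z in A, (b z - c) ∂μ) := by
    have h1 : ∫ z in A, (b z - c) ∂μ = (∫ z in A, b z ∂μ) - (μ A).toReal * c := by
      rw [integral_sub hbA (integrable_const c), setIntegral_const, smul_eq_mul]; rfl
    rw [h1, ← hc]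
    field_simp
    ring
  set I : ℝ≥0∞ := ∫⁻ y in C, ENNReal.ofReal |b y - c| ^ p ∂μ with hI
  -- Step 2
  have step2 : ENNReal.ofReal |(μ C).toReal⁻¹ * (∫ z in C, b z ∂μ) -
      (μ A).toReal⁻¹ * ∫ z in A, b z ∂μ| ≤
      (μ A)⁻¹ * ∫⁻ y in C, ENNReal.ofReal |b y - c| ∂μ := by
    rw [key1, abs_neg, abs_mul, abs_of_nonneg (inv_nonneg.mpr hmA.le),
      ENNReal.ofReal_mul (inv_nonneg.mpr hmA.le)]
    have h1 : ENNReal.ofReal (μ A).toReal⁻¹ = (μ A)⁻¹ := by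
      rw [ENNReal.ofReal_inv_of_pos hmA, ENNReal.ofReal_toReal hAtop]
    rw [h1]
    refine mul_le_mul_right ?_ _
    calc ENNReal.ofReal |∫ z in A, (b z - c) ∂μ|
        ≤ ENNReal.ofReal (∫ z in A, |b z - c| ∂μ) := ENNReal.ofReal_le_ofReal (by
            simpa [Real.norm_eq_abs] using
              norm_integral_le_integral_norm (μ := μ.restrict A) (fun z => b z - c))
      _ = ∫⁻ z in A, ENNReal.ofReal |b z - c| ∂μ :=
          ofReal_integral_eq_lintegral_ofReal hgA.abs (ae_of_all _ fun x => abs_nonneg _)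
      _ ≤ ∫⁻ z in C, ENNReal.ofReal |b z - c| ∂μ := lintegral_mono_set hAC
  -- Step 3: Hölder
  have hgC : AEStronglyMeasurable (fun y => b y - c) (μ.restrict C) :=
    hbC.sub aestronglyMeasurable_const
  have holder : ∫⁻ y in C, ENNReal.ofReal |b y - c| ∂μ ≤ I ^ (1/p) * (μ C) ^ (1 - 1/p) := by
    have h := eLpNorm_le_eLpNorm_mul_rpow_measure_univ (p := 1) (q := ENNReal.ofReal p)
      (ENNReal.one_le_ofReal.mpr hp) hgC
    rw [eLpNorm_one_eq_lintegral_enorm,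
      eLpNorm_eq_lintegral_rpow_enorm_toReal (by simpa using (ENNReal.ofReal_pos.mpr hp0).ne') ENNReal.ofReal_ne_top,
      Measure.restrict_apply_univ, ENNReal.toReal_ofReal hp0.le, ENNReal.toReal_one] at h
    have hcast : ∀ y : α, ‖b y - c‖ₑ = ENNReal.ofReal |b y - c| := fun y =>
      Real.enorm_eq_ofReal_abs _
    simp_rw [hcast] at h
    simpa [hI, one_div] using h
  -- Step 4: adjust exponents
  have hra : (μ C) ^ ((1 + lam * p)/p) * (μ C) ^ (-(1 + lam * p) * (1/p)) = 1 := by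
    rw [← ENNReal.rpow_add _ _ hC0 hCtop,
      show (1 + lam * p)/p + -(1 + lam * p) * (1/p) = 0 by field_simp; ring,
      ENNReal.rpow_zero]
  have halg : I ^ (1/p) = (μ C) ^ ((1 + lam * p)/p) * ((μ C) ^ (-(1 + lam * p)) * I) ^ (1/p) := by
    rw [ENNReal.mul_rpow_of_nonneg _ _ (by positivity : (0:ℝ) ≤ 1/p),
      ← ENNReal.rpow_mul, ← mul_assoc, hra, one_mul]
  calc ENNReal.ofReal |(μ C).toReal⁻¹ * (∫ z in C, b z ∂μ) -
        (μ A).toReal⁻¹ * ∫ z in A, b z ∂μ|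
      ≤ (μ A)⁻¹ * ∫⁻ y in C, ENNReal.ofReal |b y - c| ∂μ := step2
    _ ≤ (μ A)⁻¹ * (I ^ (1/p) * (μ C) ^ (1 - 1/p)) := mul_le_mul_right holder _
    _ = (μ A)⁻¹ * ((μ C) ^ ((1 + lam * p)/p) * (μ C) ^ (1 - 1/p) *
          ((μ C) ^ (-(1 + lam * p)) * I) ^ (1/p)) := by rw [halg]; ring
    _ = (μ A)⁻¹ * (μ C) ^ (1 + lam) * ((μ C) ^ (-(1 + lam * p)) * I) ^ (1/p) := by
        rw [← ENNReal.rpow_add _ _ hC0 hCtop,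
          show (1 + lam * p)/p + (1 - 1/p) = 1 + lam by field_simp; ring]
        ring

private lemma chain_bound {α : Type*} [MeasurableSpace α] {μ : Measure α}
    {b : α → ℝ} {p lam γ : ℝ} (hγ : 0 < γ) (hp : 1 ≤ p) (hlam0 : 0 ≤ lam)
    {F : ℝ → Set α} (hF : ∀ ⦃a c : ℝ⦄, a ≤ c → F a ⊆ F c)
    {υ : ℝ≥0∞} (hυ0 : υ ≠ 0) (hυtop : υ ≠ ⊤)
    (hvol : ∀ r : ℝ, 0 < r → μ (F r) = υ * ENNReal.ofReal (r ^ γ))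
    (hb : ∀ r : ℝ, 0 < r → MemLp b (ENNReal.ofReal p) (μ.restrict (F r)))
    {S : ℝ≥0∞}
    (hS : ∀ r : ℝ, 0 < r →
      ((μ (F r)) ^ (-(1 + lam * p)) *
        ∫⁻ y in F r, ENNReal.ofReal
          |b y - (μ (F r)).toReal⁻¹ * ∫ z in F r, b z ∂μ| ^ p ∂μ) ^ (1/p) ≤ S)
    (A : ℝ → ℝ) (hA : ∀ r, A r = (μ (F r)).toReal⁻¹ * ∫ z in F r, b z ∂μ)
    {r₁ r₂ : ℝ} (hr₂ : 0 < r₂) (hle : r₂ ≤ r₁) :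
    ENNReal.ofReal |A r₁ - A r₂| ≤
      ENNReal.ofReal ((2 ^ γ * (1 + 1 / Real.log 2)) * (1 + Real.log (r₁ / r₂))) *
        (μ (F r₁)) ^ lam * S := by
  have hp0 : 0 < p := lt_of_lt_of_le one_pos hp
  have hr₁ : 0 < r₁ := hr₂.trans_le hle
  have hV0 : ∀ r : ℝ, 0 < r → μ (F r) ≠ 0 := fun r hr => by
    rw [hvol r hr]
    exact mul_ne_zero hυ0 (ENNReal.ofReal_pos.mpr (Real.rpow_pos_of_pos hr γ)).ne'
  have hVtop : ∀ r : ℝ, 0 < r → μ (F r) ≠ ⊤ := fun r hr => by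
    rw [hvol r hr]; exact ENNReal.mul_ne_top hυtop ENNReal.ofReal_ne_top
  set t := r₁ / r₂ with ht
  have ht1 : 1 ≤ t := (one_le_div hr₂).mpr hle
  have hlt : 0 ≤ Real.log t := Real.log_nonneg ht1
  set N := ⌈Real.logb 2 t⌉₊ with hN
  have h2N : t ≤ 2 ^ (N : ℕ) := by
    calc t = 2 ^ Real.logb 2 t :=
        (Real.rpow_logb two_pos (by norm_num) (lt_of_lt_of_le one_pos ht1)).symm
      _ ≤ 2 ^ ((N : ℕ) : ℝ) :=
        Real.rpow_le_rpow_of_exponent_le one_le_two (Nat.le_ceil _)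
      _ = 2 ^ (N : ℕ) := Real.rpow_natCast 2 N
  set s : ℕ → ℝ := fun k => min (r₂ * 2 ^ k) r₁ with hs
  have hspos : ∀ k, 0 < s k := fun k => lt_min (by positivity) hr₁
  have hsle : ∀ k, s k ≤ r₁ := fun k => min_le_right _ _
  have hs0 : s 0 = r₂ := by simp [hs, min_eq_left hle]
  have hsN : s N = r₁ := by
    refine min_eq_right ?_
    calc r₁ = t * r₂ := by rw [ht]; field_simp
      _ ≤ 2 ^ N * r₂ := mul_le_mul_of_nonneg_right h2N hr₂.le
      _ = r₂ * 2 ^ N := mul_comm _ _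
  have hsmono : ∀ k, s k ≤ s (k + 1) := fun k =>
    min_le_min (by
      have h := mul_pos hr₂ (pow_pos (show (0:ℝ) < 2 by norm_num) k)
      rw [pow_succ]; nlinarith) le_rfl
  have hs2 : ∀ k, s (k + 1) ≤ 2 * s k := by
    intro k
    rcases le_total (r₂ * 2 ^ k) r₁ with h | h
    · rw [show s k = r₂ * 2 ^ k from min_eq_left h]
      calc s (k + 1) ≤ r₂ * 2 ^ (k + 1) := min_le_left _ _
        _ = 2 * (r₂ * 2 ^ k) := by ring
    · have hk : s k = r₁ := min_eq_right h
      have hk1 : s (k + 1) = r₁ := min_eq_right (h.trans (by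
        have h2 := mul_pos hr₂ (pow_pos (show (0:ℝ) < 2 by norm_num) k)
        rw [pow_succ]; nlinarith))
      rw [hk, hk1]; linarith
  -- per-step bound
  have hstep : ∀ k, ENNReal.ofReal |A (s (k + 1)) - A (s k)| ≤
      ENNReal.ofReal (2 ^ γ) * (μ (F r₁)) ^ lam * S := by
    intro k
    haveI : IsFiniteMeasure (μ.restrict (F (s k))) :=
      ⟨by rw [Measure.restrict_apply_univ]; exact (hVtop _ (hspos k)).lt_top⟩
    have hbint : Integrable b (μ.restrict (F (s k))) :=
      (hb _ (hspos k)).integrable (ENNReal.one_le_ofReal.mpr hp)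
    have h1 := step_bound hp hlam0 (hF (hsmono k)) (hV0 _ (hspos k))
      (hVtop _ (hspos (k + 1))) hbint (hb _ (hspos (k + 1))).aestronglyMeasurable
    rw [hA (s (k+1)), hA (s k)]
    refine h1.trans ?_
    have hT := hS _ (hspos (k + 1))
    have hVle : μ (F (s (k + 1))) ≤ ENNReal.ofReal (2 ^ γ) * μ (F (s k)) := by
      rw [hvol _ (hspos (k + 1)), hvol _ (hspos k)]
      have hexp : s (k + 1) ^ γ ≤ 2 ^ γ * s k ^ γ := by
        calc s (k + 1) ^ γ ≤ (2 * s k) ^ γ :=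
            Real.rpow_le_rpow (hspos (k + 1)).le (hs2 k) hγ.le
          _ = 2 ^ γ * s k ^ γ := Real.mul_rpow (by norm_num) (hspos k).le
      calc υ * ENNReal.ofReal (s (k + 1) ^ γ)
          ≤ υ * ENNReal.ofReal (2 ^ γ * s k ^ γ) := by
            gcongr
        _ = ENNReal.ofReal (2 ^ γ) * (υ * ENNReal.ofReal (s k ^ γ)) := by
            rw [ENNReal.ofReal_mul (by positivity : (0:ℝ) ≤ (2:ℝ) ^ γ)]; ring
    have hmain : (μ (F (s k)))⁻¹ * (μ (F (s (k + 1)))) ^ (1 + lam) ≤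
        ENNReal.ofReal (2 ^ γ) * (μ (F r₁)) ^ lam := by
      rw [ENNReal.rpow_add _ _ (hV0 _ (hspos (k + 1))) (hVtop _ (hspos (k + 1))),
        ENNReal.rpow_one]
      calc (μ (F (s k)))⁻¹ * (μ (F (s (k + 1))) * (μ (F (s (k + 1)))) ^ lam)
          ≤ (μ (F (s k)))⁻¹ * ((ENNReal.ofReal (2 ^ γ) * μ (F (s k))) * (μ (F r₁)) ^ lam) := by
            gcongr
            exact hF (hsle _)
        _ = ENNReal.ofReal (2 ^ γ) * (μ (F r₁)) ^ lam * ((μ (F (s k)))⁻¹ * μ (F (s k))) := by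
            ring
        _ = ENNReal.ofReal (2 ^ γ) * (μ (F r₁)) ^ lam := by
            rw [ENNReal.inv_mul_cancel (hV0 _ (hspos k)) (hVtop _ (hspos k)), mul_one]
    calc (μ (F (s k)))⁻¹ * (μ (F (s (k + 1)))) ^ (1 + lam) *
          ((μ (F (s (k + 1)))) ^ (-(1 + lam * p)) *
            ∫⁻ y in F (s (k + 1)), ENNReal.ofReal
              |b y - (μ (F (s (k + 1)))).toReal⁻¹ *
                ∫ z in F (s (k + 1)), b z ∂μ| ^ p ∂μ) ^ (1/p)
        ≤ (ENNReal.ofReal (2 ^ γ) * (μ (F r₁)) ^ lam) * S := mul_le_mul' hmain hT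
      _ = ENNReal.ofReal (2 ^ γ) * (μ (F r₁)) ^ lam * S := by ring
  -- telescope
  have htel : A r₁ - A r₂ = ∑ k ∈ Finset.range N, (A (s (k + 1)) - A (s k)) := by
    rw [Finset.sum_range_sub (fun k => A (s k)), hs0, hsN]
  have hlog2 : 0 < Real.log 2 := Real.log_pos one_lt_two
  have h2γ : (0:ℝ) < 2 ^ γ := Real.rpow_pos_of_pos two_pos γ
  have hNle : (N : ℝ) * 2 ^ γ ≤ (2 ^ γ * (1 + 1 / Real.log 2)) * (1 + Real.log t) := by
    have h1 : (N : ℝ) ≤ Real.logb 2 t + 1 := by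
      have h0 : 0 ≤ Real.logb 2 t := Real.logb_nonneg one_lt_two ht1
      have hcc := Nat.ceil_lt_add_one h0
      rw [← hN] at hcc
      linarith
    have h2 : (N : ℝ) ≤ (1 + 1 / Real.log 2) * (1 + Real.log t) := by
      rw [Real.logb, div_eq_mul_one_div] at h1
      have expand : (1 + 1 / Real.log 2) * (1 + Real.log t) =
          1 + Real.log t + 1 / Real.log 2 + Real.log t * (1 / Real.log 2) := by ring
      rw [expand]
      have he : 0 ≤ 1 / Real.log 2 := (one_div_pos.mpr hlog2).le
      have := mul_nonneg hlt he
      linarith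
    calc (N : ℝ) * 2 ^ γ ≤ ((1 + 1 / Real.log 2) * (1 + Real.log t)) * 2 ^ γ :=
        mul_le_mul_of_nonneg_right h2 h2γ.le
      _ = (2 ^ γ * (1 + 1 / Real.log 2)) * (1 + Real.log t) := by ring
  calc ENNReal.ofReal |A r₁ - A r₂|
      ≤ ∑ k ∈ Finset.range N, ENNReal.ofReal |A (s (k + 1)) - A (s k)| := by
        rw [htel]
        refine le_trans (ENNReal.ofReal_le_ofReal
          (Finset.abs_sum_le_sum_abs _ _)) ?_
        exact (ENNReal.ofReal_sum_of_nonneg fun i _ => abs_nonneg _).le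
    _ ≤ ∑ k ∈ Finset.range N, ENNReal.ofReal (2 ^ γ) * (μ (F r₁)) ^ lam * S :=
        Finset.sum_le_sum fun k _ => hstep k
    _ = (N : ℝ≥0∞) * (ENNReal.ofReal (2 ^ γ) * ((μ (F r₁)) ^ lam * S)) := by
        simp [Finset.sum_const, nsmul_eq_mul, mul_assoc]
    _ = ENNReal.ofReal ((N : ℝ) * 2 ^ γ) * ((μ (F r₁)) ^ lam * S) := by
        rw [← mul_assoc, ← ENNReal.ofReal_natCast N,
          ← ENNReal.ofReal_mul (Nat.cast_nonneg N)]
    _ ≤ ENNReal.ofReal ((2 ^ γ * (1 + 1 / Real.log 2)) * (1 + Real.log t)) *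
          ((μ (F r₁)) ^ lam * S) := mul_le_mul_left (ENNReal.ofReal_le_ofReal hNle) _
    _ = ENNReal.ofReal ((2 ^ γ * (1 + 1 / Real.log 2)) * (1 + Real.log (r₁ / r₂))) *
          (μ (F r₁)) ^ lam * S := by rw [← ht]; ring

/-- Comparison of averages for parabolic local Campanato functions. For
`b ∈ LC_{p,λ,P}^{x₀}`, `1 ≤ p < ∞`, `0 ≤ λ < 1/γ` and `r₁ ≥ r₂ > 0`,
`|b_{E(x₀,r₁)} - b_{E(x₀,r₂)}| ≤ C (1 + ln(r₁/r₂)) |E(x₀,r₁)|^λ ‖b‖_{LC_{p,λ,P}^{x₀}}`,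
with `C` independent of `b, r₁, r₂`. -/
theorem stmt17 (n : ℕ) (γ p lam : ℝ) (hγ : 0 < γ) (hp : 1 ≤ p)
    (hlam0 : 0 ≤ lam) (hlam : lam < 1 / γ)
    (ρ : (Fin n → ℝ) → ℝ) (hρ : ∀ x, 0 ≤ ρ x)
    (υ : ℝ≥0∞) (hυ0 : υ ≠ 0) (hυtop : υ ≠ ⊤)
    (hvol : ∀ (x : Fin n → ℝ) (r : ℝ), 0 < r →
      volume {y : Fin n → ℝ | ρ (x - y) < r} = υ * ENNReal.ofReal (r ^ γ))
    (x₀ : Fin n → ℝ) :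
    ∃ C : ℝ, 0 < C ∧ ∀ b : (Fin n → ℝ) → ℝ,
      (∀ r : ℝ, 0 < r →
        MemLp b (ENNReal.ofReal p) (volume.restrict {y : Fin n → ℝ | ρ (x₀ - y) < r})) →
      ∀ r₁ r₂ : ℝ, 0 < r₂ → r₂ ≤ r₁ →
      ENNReal.ofReal
          |(volume {z : Fin n → ℝ | ρ (x₀ - z) < r₁}).toReal⁻¹ *
              (∫ z in {z : Fin n → ℝ | ρ (x₀ - z) < r₁}, b z) -
            (volume {z : Fin n → ℝ | ρ (x₀ - z) < r₂}).toReal⁻¹ *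
              ∫ z in {z : Fin n → ℝ | ρ (x₀ - z) < r₂}, b z| ≤
        ENNReal.ofReal (C * (1 + Real.log (r₁ / r₂))) *
          (volume {y : Fin n → ℝ | ρ (x₀ - y) < r₁}) ^ lam *
          ⨆ r : ℝ, ⨆ _ : 0 < r,
            ((volume {y : Fin n → ℝ | ρ (x₀ - y) < r}) ^ (-(1 + lam * p)) *
              ∫⁻ y in {y : Fin n → ℝ | ρ (x₀ - y) < r},
                ENNReal.ofReal
                  |b y - (volume {z : Fin n → ℝ | ρ (x₀ - z) < r}).toReal⁻¹ *
                      ∫ z in {z : Fin n → ℝ | ρ (x₀ - z) < r}, b z| ^ p) ^ (1 / p) := by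
  refine ⟨2 ^ γ * (1 + 1 / Real.log 2), ?_, ?_⟩
  · have h1 : 0 < 1 / Real.log 2 := one_div_pos.mpr (Real.log_pos one_lt_two)
    have h2 : (0:ℝ) < 2 ^ γ := Real.rpow_pos_of_pos two_pos γ
    nlinarith
  intro b hb r₁ r₂ hr₂ hle
  have hF : ∀ ⦃a c : ℝ⦄, a ≤ c →
      {y : Fin n → ℝ | ρ (x₀ - y) < a} ⊆ {y : Fin n → ℝ | ρ (x₀ - y) < c} :=
    fun a c h y hy => lt_of_lt_of_le hy h
  exact chain_bound hγ hp hlam0 hF hυ0 hυtop (fun r hr => hvol x₀ r hr) hb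
    (fun r hr => le_iSup₂ (f := fun (r : ℝ) (_ : 0 < r) =>
      ((volume {y : Fin n → ℝ | ρ (x₀ - y) < r}) ^ (-(1 + lam * p)) *
        ∫⁻ y in {y : Fin n → ℝ | ρ (x₀ - y) < r},
          ENNReal.ofReal
            |b y - (volume {z : Fin n → ℝ | ρ (x₀ - z) < r}).toReal⁻¹ *
                ∫ z in {z : Fin n → ℝ | ρ (x₀ - z) < r}, b z| ^ p) ^ (1 / p)) r hr)
    (fun r => (volume {z : Fin n → ℝ | ρ (x₀ - z) < r}).toReal⁻¹ *
      ∫ z in {z : Fin n → ℝ | ρ (x₀ - z) < r}, b z)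
    (fun r => rfl) hr₂ hle
end

section
/- The pair of functions φ₁(r) = χ_{(1,∞)}(r)^{-1} · r^{β − γ/p} (interpreted as φ₁(r) = r^{β−γ/p} for r > 1 and φ₁(r) = +∞ for r ≤ 1) and φ₂(r) = r^{−γ/p}(1 + r^β), with 0 < β < γ/p, satisfies ∫_r^∞ (essinf_{t<τ<∞} φ₁(τ) τ^{γ/p}) / t^{γ/p + 1} dt ≤ C φ₂(r) for all r > 0, but does not satisfy ∫_r^∞ φ₁(t) dt/t ≤ C φ₂(r) for all r > 0. -/
open Real Set MeasureTheory ENNReal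

/-- With `φ₁(r) = r^{β-γ/p}` for `r > 1` and `φ₁(r) = ∞` for `r ≤ 1`, and
`φ₂(r) = r^{-γ/p}(1 + r^β)`, where `0 < β < γ/p`, the pair `(φ₁, φ₂)` satisfies the
essinf-type condition `∫_r^∞ (essinf_{t<τ<∞} φ₁(τ) τ^{γ/p}) t^{-γ/p-1} dt ≤ C φ₂(r)` for
all `r > 0`, but does not satisfy the pointwise condition `∫_r^∞ φ₁(t) dt/t ≤ C φ₂(r)`. -/
theorem stmt19 (γ p β : ℝ) (hγ : 0 < γ) (hp : 1 ≤ p) (hβ0 : 0 < β) (hβ : β < γ / p)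
    (φ₁ φ₂ : ℝ → ℝ≥0∞)
    (hφ₁ : ∀ r : ℝ, φ₁ r = if 1 < r then ENNReal.ofReal (r ^ (β - γ / p)) else ⊤)
    (hφ₂ : ∀ r : ℝ, φ₂ r = ENNReal.ofReal (r ^ (-(γ / p)) * (1 + r ^ β))) :
    (∃ C : ℝ≥0∞, C ≠ ⊤ ∧ ∀ r : ℝ, 0 < r →
        (∫⁻ t in Set.Ioi r,
          (essInf (fun τ : ℝ => φ₁ τ * ENNReal.ofReal (τ ^ (γ / p)))
              (volume.restrict (Set.Ioi t))) * ENNReal.ofReal (t ^ (-(γ / p) - 1))) ≤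
          C * φ₂ r) ∧
    ¬(∃ C : ℝ≥0∞, C ≠ ⊤ ∧ ∀ r : ℝ, 0 < r →
        (∫⁻ t in Set.Ioi r, φ₁ t / ENNReal.ofReal t) ≤ C * φ₂ r) := by
  set q : ℝ := γ / p with hqdef
  have hq : 0 < q := div_pos hγ (lt_of_lt_of_le one_pos hp)
  have hqβ : 0 < q - β := sub_pos.2 hβ
  constructor
  · -- essinf condition holds
    refine ⟨ENNReal.ofReal (2 ^ β * (1 / (q - β) + 1 / q)), ofReal_ne_top, fun r hr => ?_⟩
    set g : ℝ → ℝ≥0∞ := fun τ : ℝ => φ₁ τ * ENNReal.ofReal (τ ^ q) with hg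
    -- pointwise bound on the essInf
    have hE : ∀ t : ℝ, 0 < t →
        essInf g (volume.restrict (Set.Ioi t)) ≤ ENNReal.ofReal (2 ^ β * (t ^ β + 1)) := by
      intro t ht
      set m : ℝ := max t 1 with hm
      have hm1 : (1 : ℝ) ≤ m := le_max_right _ _
      have hm0 : (0 : ℝ) < m := lt_of_lt_of_le one_pos hm1
      have hsub : Set.Ioc m (2 * m) ⊆ Set.Ioi t := fun x hx =>
        lt_of_le_of_lt (le_max_left t 1) hx.1
      have hle : essInf g (volume.restrict (Set.Ioi t)) ≤
          essInf g (volume.restrict (Set.Ioc m (2 * m))) := by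
        refine essInf_antitone_measure
          (Measure.absolutelyContinuous_of_le (Measure.restrict_mono hsub le_rfl))
      refine hle.trans ?_
      have hne : volume.restrict (Set.Ioc m (2 * m)) ≠ 0 := by
        rw [Ne, Measure.restrict_eq_zero, Real.volume_Ioc]
        simp only [ne_eq, ENNReal.ofReal_eq_zero, not_le]
        linarith
      have hbound : ∀ τ ∈ Set.Ioc m (2 * m), g τ ≤ ENNReal.ofReal ((2 * m) ^ β) := by
        intro τ hτ
        have hτ1 : 1 < τ := lt_of_le_of_lt hm1 hτ.1
        have hτ0 : 0 < τ := lt_trans one_pos hτ1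
        show φ₁ τ * ENNReal.ofReal (τ ^ q) ≤ ENNReal.ofReal ((2 * m) ^ β)
        rw [hφ₁ τ, if_pos hτ1, ← ENNReal.ofReal_mul (by positivity),
          ← Real.rpow_add hτ0]
        have : β - q + q = β := by ring
        rw [this]
        exact ENNReal.ofReal_le_ofReal
          (Real.rpow_le_rpow hτ0.le hτ.2 hβ0.le)
      haveI : (ae (volume.restrict (Set.Ioc m (2 * m)))).NeBot := ae_neBot.2 hne
      have hfreq : ∃ᶠ τ in ae (volume.restrict (Set.Ioc m (2 * m))),
          g τ ≤ ENNReal.ofReal ((2 * m) ^ β) :=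
        ((ae_restrict_mem measurableSet_Ioc).mono hbound).frequently
      have h1 : essInf g (volume.restrict (Set.Ioc m (2 * m))) ≤
          ENNReal.ofReal ((2 * m) ^ β) :=
        Filter.liminf_le_of_frequently_le' hfreq
      refine h1.trans (ENNReal.ofReal_le_ofReal ?_)
      rw [Real.mul_rpow (by norm_num) hm0.le]
      have hmb : m ^ β ≤ t ^ β + 1 := by
        rcases le_total t 1 with h | h
        · rw [hm, max_eq_right h, Real.one_rpow]
          have : (0:ℝ) ≤ t ^ β := Real.rpow_nonneg ht.le _
          linarith
        · rw [hm, max_eq_left h]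
          linarith [Real.rpow_nonneg ht.le β]
      have h2b : (0:ℝ) ≤ (2:ℝ) ^ β := Real.rpow_nonneg (by norm_num) _
      nlinarith [Real.rpow_nonneg ht.le β]
    -- pointwise bound on the integrand
    have hpt : ∀ t ∈ Set.Ioi r,
        essInf g (volume.restrict (Set.Ioi t)) * ENNReal.ofReal (t ^ (-q - 1)) ≤
          ENNReal.ofReal (2 ^ β) *
            (ENNReal.ofReal (t ^ (β - q - 1)) + ENNReal.ofReal (t ^ (-q - 1))) := by
      intro t ht
      have ht0 : 0 < t := lt_trans hr ht
      calc essInf g (volume.restrict (Set.Ioi t)) * ENNReal.ofReal (t ^ (-q - 1))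
          ≤ ENNReal.ofReal (2 ^ β * (t ^ β + 1)) * ENNReal.ofReal (t ^ (-q - 1)) := by
            exact mul_le_mul_left (hE t ht0) _
        _ = ENNReal.ofReal (2 ^ β) *
            (ENNReal.ofReal (t ^ (β - q - 1)) + ENNReal.ofReal (t ^ (-q - 1))) := by
            rw [← ENNReal.ofReal_add (Real.rpow_nonneg ht0.le _) (Real.rpow_nonneg ht0.le _),
              ← ENNReal.ofReal_mul (by positivity),
              ← ENNReal.ofReal_mul (by positivity)]
            congr 1
            have h1 : t ^ β * t ^ (-q - 1) = t ^ (β - q - 1) := by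
              rw [← Real.rpow_add ht0]; ring_nf
            linear_combination (2:ℝ) ^ β * h1
    -- compute the two rpow integrals
    have hint : ∀ a : ℝ, a < -1 →
        (∫⁻ t in Set.Ioi r, ENNReal.ofReal (t ^ a)) =
          ENNReal.ofReal (-r ^ (a + 1) / (a + 1)) := by
      intro a ha
      rw [← ofReal_integral_eq_lintegral_ofReal (integrableOn_Ioi_rpow_of_lt ha hr)
        ((ae_restrict_mem measurableSet_Ioi).mono fun x hx =>
          Real.rpow_nonneg (le_of_lt (lt_trans hr hx)) _),
        integral_Ioi_rpow_of_lt ha hr]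
    have hmeas : ∀ a : ℝ, Measurable fun t : ℝ => ENNReal.ofReal (t ^ a) := by
      intro a
      fun_prop
    calc (∫⁻ t in Set.Ioi r,
            essInf g (volume.restrict (Set.Ioi t)) * ENNReal.ofReal (t ^ (-q - 1)))
        ≤ ∫⁻ t in Set.Ioi r, ENNReal.ofReal (2 ^ β) *
            (ENNReal.ofReal (t ^ (β - q - 1)) + ENNReal.ofReal (t ^ (-q - 1))) :=
          setLIntegral_mono_ae (by fun_prop)
            (Filter.Eventually.of_forall hpt)
      _ = ENNReal.ofReal (2 ^ β) *
            ((∫⁻ t in Set.Ioi r, ENNReal.ofReal (t ^ (β - q - 1))) +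
             (∫⁻ t in Set.Ioi r, ENNReal.ofReal (t ^ (-q - 1)))) := by
          rw [lintegral_const_mul _ (f := fun t => ENNReal.ofReal (t ^ (β - q - 1)) + ENNReal.ofReal (t ^ (-q - 1))) (((hmeas _).add (hmeas _))),
            lintegral_add_left (hmeas _)]
      _ = ENNReal.ofReal (2 ^ β) *
            (ENNReal.ofReal (-r ^ (β - q - 1 + 1) / (β - q - 1 + 1)) +
             ENNReal.ofReal (-r ^ (-q - 1 + 1) / (-q - 1 + 1))) := by
          rw [hint _ (by linarith), hint _ (by linarith)]
      _ = ENNReal.ofReal (2 ^ β) *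
            (ENNReal.ofReal (r ^ (β - q) / (q - β)) + ENNReal.ofReal (r ^ (-q) / q)) := by
          congr 2
          · congr 1
            rw [show β - q - 1 + 1 = β - q by ring, neg_div, ← div_neg, neg_sub]
          · congr 1
            rw [show -q - 1 + 1 = -q by ring, neg_div, ← div_neg, neg_neg]
      _ ≤ ENNReal.ofReal (2 ^ β * (1 / (q - β) + 1 / q)) * φ₂ r := by
          rw [hφ₂ r, ← ENNReal.ofReal_add (by positivity) (by positivity),
            ← ENNReal.ofReal_mul (by positivity),
            ← ENNReal.ofReal_mul (by positivity)]
          refine ENNReal.ofReal_le_ofReal ?_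
          have hA : (0:ℝ) ≤ r ^ (β - q) := Real.rpow_nonneg hr.le _
          have hB : (0:ℝ) ≤ r ^ (-q) := Real.rpow_nonneg hr.le _
          have h2b : (0:ℝ) ≤ (2:ℝ) ^ β := Real.rpow_nonneg (by norm_num) _
          have hrw : r ^ (-q) * (1 + r ^ β) = r ^ (-q) + r ^ (β - q) := by
            rw [mul_add, mul_one, ← Real.rpow_add hr]
            ring_nf
          rw [hrw]
          have k1 : r ^ (β - q) / (q - β) ≤ (r ^ (-q) + r ^ (β - q)) / (q - β) :=
            (div_le_div_iff_of_pos_right hqβ).2 (by linarith)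
          have k2 : r ^ (-q) / q ≤ (r ^ (-q) + r ^ (β - q)) / q :=
            (div_le_div_iff_of_pos_right hq).2 (by linarith)
          have key := mul_le_mul_of_nonneg_left (add_le_add k1 k2) h2b
          have heq : 2 ^ β * ((r ^ (-q) + r ^ (β - q)) / (q - β) +
              (r ^ (-q) + r ^ (β - q)) / q) =
              2 ^ β * (1 / (q - β) + 1 / q) * (r ^ (-q) + r ^ (β - q)) := by
            ring
          linarith
  · -- pointwise condition fails
    rintro ⟨C, hC, h⟩
    have h2 := h (1 / 2) (by norm_num)
    have hlow : (∫⁻ t in Set.Ioc (1/2 : ℝ) 1, φ₁ t / ENNReal.ofReal t) ≤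
        ∫⁻ t in Set.Ioi (1/2 : ℝ), φ₁ t / ENNReal.ofReal t :=
      lintegral_mono_set (fun x hx => hx.1)
    have htop : (∫⁻ t in Set.Ioc (1/2 : ℝ) 1, φ₁ t / ENNReal.ofReal t) = ⊤ := by
      have : ∀ t ∈ Set.Ioc (1/2 : ℝ) 1, φ₁ t / ENNReal.ofReal t = ⊤ := by
        intro t ht
        rw [hφ₁, if_neg (not_lt.2 ht.2)]
        exact ENNReal.top_div_of_ne_top ofReal_ne_top
      rw [setLIntegral_congr_fun measurableSet_Ioc this,
        setLIntegral_const, Real.volume_Ioc]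
      rw [ENNReal.top_mul]
      simp only [ne_eq, ENNReal.ofReal_eq_zero, not_le]
      norm_num
    have : (⊤ : ℝ≥0∞) ≤ C * φ₂ (1/2) := by
      rw [← htop]; exact hlow.trans h2
    rw [top_le_iff] at this
    exact (ENNReal.mul_ne_top hC (by rw [hφ₂]; exact ofReal_ne_top)) this
end
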